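/- arXiv:1910.14097 — 4 statements merged into one kernel-verified Lean document; each statement's English description precedes it below -/
import Mathlib

section
/- Let β = ∏_{i≥0}(1 - 3^{-(2i+1)}) and for each m ≥ 0 let β_m = β / ∏_{j=1}^m (3^j - 1) (with the empty product equal to 1). Then ∑_{m=0}^∞ β_m / 3^m = 3/4. -/
open Finset Filter Topology

namespace AuxB3

noncomputable section

def q : ℝ := 3⁻¹

lemma q_def : q = 3⁻¹ := rfl

lemma hq0 : (0:ℝ) < q := by norm_num [q_def]
lemma hq1 : q < 1 := by norm_num [q_def]

lemma q_pow_lt_one (k : ℕ) (hk : k ≠ 0) : q ^ k < 1 :=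
  pow_lt_one₀ hq0.le hq1 hk

lemma q_pow_le_q (k : ℕ) : q ^ (k+1) ≤ q := by
  calc q ^ (k+1) ≤ q ^ 1 := pow_le_pow_of_le_one hq0.le hq1.le (by omega)
  _ = q := pow_one q

/-- Summability of `log (1 - x i)` for small summable `x`. -/
lemma summable_log_one_sub {x : ℕ → ℝ} (h0 : ∀ i, 0 ≤ x i) (h2 : ∀ i, x i ≤ 1/2)
    (hs : Summable x) : Summable fun i => Real.log (1 - x i) := by
  have key : ∀ i, ‖Real.log (1 - x i)‖ ≤ 2 * x i := by
    intro i
    have hpos : (0:ℝ) < 1 - x i := by linarith [h2 i]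
    have hle : Real.log (1 - x i) ≤ 0 := Real.log_nonpos (by linarith [h0 i]) (by linarith [h0 i])
    rw [Real.norm_eq_abs, abs_of_nonpos hle]
    have h1 : -Real.log (1 - x i) = Real.log (1 - x i)⁻¹ := (Real.log_inv _).symm
    rw [h1]
    have h3 : Real.log (1 - x i)⁻¹ ≤ (1 - x i)⁻¹ - 1 :=
      Real.log_le_sub_one_of_pos (by positivity)
    have h4 : (1 - x i)⁻¹ ≤ 1 + 2 * x i := by
      rw [inv_eq_one_div, div_le_iff₀ hpos]
      nlinarith [h0 i, h2 i]
    linarith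
  exact Summable.of_norm_bounded (hs.mul_left 2) key

lemma summable_q_odd : Summable fun i : ℕ => q ^ (2*i+1) := by
  have : (fun i : ℕ => q ^ (2*i+1)) = fun i => (q^2)^i * q := by
    funext i; rw [← pow_mul]; ring
  rw [this]
  exact (summable_geometric_of_lt_one (pow_nonneg hq0.le 2)
    (by nlinarith [hq0, hq1])).mul_right q

lemma summable_q_succ : Summable fun i : ℕ => q ^ (i+1) := by
  have : (fun i : ℕ => q ^ (i+1)) = fun i => q^i * q := by
    funext i; ring
  rw [this]
  exact (summable_geometric_of_lt_one hq0.le hq1).mul_right q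

lemma q_odd_le_half (i : ℕ) : q ^ (2*i+1) ≤ 1/2 := by
  have := q_pow_le_q (2*i); rw [q_def] at this ⊢; linarith
lemma q_succ_le_half (i : ℕ) : q ^ (i+1) ≤ 1/2 := by
  have := q_pow_le_q i; rw [q_def] at this ⊢; linarith

/-- HasProd and positivity for products of `1 - x i`. -/
lemma hasProd_one_sub {x : ℕ → ℝ} (h0 : ∀ i, 0 ≤ x i) (h2 : ∀ i, x i ≤ 1/2)
    (hs : Summable x) :
    HasProd (fun i => 1 - x i) (∏' i, (1 - x i)) ∧ 0 < ∏' i, (1 - x i) := by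
  have hpos : ∀ (u : Unit) (n : ℕ), 0 < (fun i (_ : Unit) => 1 - x i) n u := by
    intro _ n; have := h2 n; simp; linarith
  have hlog : ∀ (u : Unit), Summable fun n => Real.log ((fun i (_ : Unit) => 1 - x i) n u) := by
    intro _; exact summable_log_one_sub h0 h2 hs
  constructor
  · exact (Real.hasProd_of_hasSum_log (f := fun i => 1 - x i) (hpos ())
      (hlog ()).hasSum).multipliable.hasProd
  · exact lt_of_lt_of_eq (Real.exp_pos _)
      (Real.rexp_tsum_eq_tprod (f := fun i => 1 - x i) (hpos ()) (hlog ()))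

def D (m : ℕ) : ℝ := ∏ j ∈ Finset.range m, (1 - q ^ (j+1))

lemma D_pos (m : ℕ) : 0 < D m := by
  apply Finset.prod_pos
  intro j _
  have := q_pow_lt_one (j+1) (by omega)
  linarith

lemma sum_q_le (m : ℕ) : ∑ j ∈ Finset.range m, q ^ (j+1) ≤ 1/2 := by
  have h1 : ∑ j ∈ Finset.range m, q ^ (j+1) ≤ ∑' j : ℕ, q ^ (j+1) :=
    Summable.sum_le_tsum _ (fun i _ => pow_nonneg hq0.le _) summable_q_succ
  have h2 : ∑' j : ℕ, q ^ (j+1) = q * (1 - q)⁻¹ := by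
    have : (fun j : ℕ => q ^ (j+1)) = fun j => q * q^j := by funext j; ring
    rw [this, tsum_mul_left, tsum_geometric_of_lt_one hq0.le hq1]
  have h3 : q * (1 - q)⁻¹ = 1/2 := by rw [q_def]; norm_num
  rw [h2, h3] at h1
  exact h1

lemma D_ge (m : ℕ) : 1/2 ≤ D m := by
  have key : ∀ n, 1 - ∑ j ∈ Finset.range n, q ^ (j+1) ≤ D n := by
    intro n
    induction n with
    | zero => simp [D]
    | succ n ih =>
      rw [D, Finset.prod_range_succ, Finset.sum_range_succ, ← D]
      have hq : 0 ≤ q ^ (n+1) := pow_nonneg hq0.le _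
      have hq' : q ^ (n+1) ≤ 1/2 := q_succ_le_half n
      have hs : 0 ≤ ∑ j ∈ Finset.range n, q ^ (j+1) :=
        Finset.sum_nonneg fun i _ => pow_nonneg hq0.le _
      nlinarith [D_pos n]
  have := key m
  have := sum_q_le m
  linarith

lemma D_le_one (m : ℕ) : D m ≤ 1 := by
  apply Finset.prod_le_one
  · intro j _; have := q_pow_lt_one (j+1) (by omega); linarith
  · intro j _; have : 0 < q ^ (j+1) := pow_pos hq0 _; linarith

def c (z : ℝ) (m : ℕ) : ℝ := (∏ j ∈ Finset.range m, q ^ j) * z ^ m / D m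

lemma num_nonneg (m : ℕ) : 0 ≤ ∏ j ∈ Finset.range m, q ^ j :=
  Finset.prod_nonneg fun j _ => pow_nonneg hq0.le _

lemma num_le_one (m : ℕ) : ∏ j ∈ Finset.range m, q ^ j ≤ 1 := by
  apply Finset.prod_le_one
  · intro j _; exact pow_nonneg hq0.le _
  · intro j _; exact pow_le_one₀ hq0.le hq1.le

lemma c_nonneg {z : ℝ} (hz : 0 ≤ z) (m : ℕ) : 0 ≤ c z m :=
  div_nonneg (mul_nonneg (num_nonneg m) (pow_nonneg hz m)) (D_pos m).le

lemma c_le {z : ℝ} (hz : 0 ≤ z) (m : ℕ) : c z m ≤ 2 * z ^ m := by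
  unfold c
  rw [div_le_iff₀ (D_pos m)]
  have h1 : (∏ j ∈ Finset.range m, q ^ j) * z ^ m ≤ 1 * z ^ m :=
    mul_le_mul_of_nonneg_right (num_le_one m) (pow_nonneg hz m)
  have h2 : 2 * z ^ m * D m ≥ 2 * z ^ m * (1/2) := by
    have h0 : 0 ≤ 2 * z ^ m := by
      have := pow_nonneg hz m; linarith
    exact mul_le_mul_of_nonneg_left (D_ge m) h0
  nlinarith [pow_nonneg hz m]

lemma c_zero (z : ℝ) : c z 0 = 1 := by simp [c, D]

lemma summable_c {z : ℝ} (hz : 0 ≤ z) (hz1 : z < 1) : Summable (c z) :=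
  Summable.of_nonneg_of_le (c_nonneg hz) (c_le hz)
    ((summable_geometric_of_lt_one hz hz1).mul_left 2)

def F (z : ℝ) : ℝ := ∑' m, c z m

lemma c_shift (z : ℝ) (m : ℕ) : c z (m+1) = c (q*z) (m+1) + z * c (q*z) m := by
  unfold c
  have hD1 : D (m+1) = D m * (1 - q^(m+1)) := by rw [D, D, Finset.prod_range_succ]
  have hnum : ∏ j ∈ Finset.range (m+1), q ^ j = (∏ j ∈ Finset.range m, q ^ j) * q ^ m :=
    Finset.prod_range_succ _ _
  have hq1' : (1:ℝ) - q^(m+1) ≠ 0 := by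
    have := q_pow_lt_one (m+1) (by omega); intro h; linarith [h]
  have hD0 : D m ≠ 0 := (D_pos m).ne'
  rw [hD1, hnum]
  field_simp
  ring_nf

lemma func_eq {z : ℝ} (hz : 0 ≤ z) (hz1 : z < 1) : F z = F (q*z) + z * F (q*z) := by
  have hqz : 0 ≤ q*z := mul_nonneg hq0.le hz
  have hqz1 : q*z < 1 := by nlinarith [hq0, hq1]
  have hs := summable_c hz hz1
  have hs' := summable_c hqz hqz1
  have hshift : Summable fun m => c (q*z) (m+1) := (summable_nat_add_iff 1).2 hs'
  have h1 : F z = c z 0 + ∑' m, c z (m+1) := Summable.tsum_eq_zero_add hs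
  have h2 : F (q*z) = c (q*z) 0 + ∑' m, c (q*z) (m+1) := Summable.tsum_eq_zero_add hs'
  have h3 : ∑' m, c z (m+1) = ∑' m, (c (q*z) (m+1) + z * c (q*z) m) :=
    tsum_congr fun m => c_shift z m
  have h4 : ∑' m, (c (q*z) (m+1) + z * c (q*z) m)
      = (∑' m, c (q*z) (m+1)) + ∑' m, z * c (q*z) m :=
    Summable.tsum_add hshift (hs'.mul_left z)
  have h5 : ∑' m, z * c (q*z) m = z * F (q*z) := tsum_mul_left
  rw [c_zero] at h1 h2
  rw [h3, h4, h5] at h1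
  unfold F at *
  linarith

lemma F_ge_one {z : ℝ} (hz : 0 ≤ z) (hz1 : z < 1) : 1 ≤ F z := by
  have := Summable.le_tsum (summable_c hz hz1) 0 (fun j _ => c_nonneg hz j)
  rwa [c_zero] at this

lemma F_le {z : ℝ} (hz : 0 ≤ z) (hz2 : z ≤ 1/2) : F z ≤ 1 + 4 * z := by
  have hz1 : z < 1 := by linarith
  have hs := summable_c hz hz1
  have h1 : F z = 1 + ∑' m, c z (m+1) := by
    rw [F, Summable.tsum_eq_zero_add hs, c_zero]
  have hshift : Summable fun m => c z (m+1) := (summable_nat_add_iff 1).2 hs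
  have hgeo : Summable fun m : ℕ => 2 * z * z ^ m :=
    (summable_geometric_of_lt_one hz hz1).mul_left _
  have h2 : ∑' m, c z (m+1) ≤ ∑' m : ℕ, 2 * z * z ^ m := by
    apply Summable.tsum_le_tsum _ hshift hgeo
    intro m
    calc c z (m+1) ≤ 2 * z ^ (m+1) := c_le hz (m+1)
    _ = 2 * z * z ^ m := by ring
  have h3 : ∑' m : ℕ, 2 * z * z ^ m = 2 * z * (1 - z)⁻¹ := by
    rw [tsum_mul_left, tsum_geometric_of_lt_one hz hz1]
  have h4 : (1 - z)⁻¹ ≤ 2 := by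
    rw [inv_eq_one_div, div_le_iff₀ (by linarith : (0:ℝ) < 1 - z)]
    linarith
  have h5 : 2 * z * (1 - z)⁻¹ ≤ 4 * z := by nlinarith [inv_nonneg.2 (by linarith : (0:ℝ) ≤ 1 - z)]
  rw [h3] at h2
  linarith

lemma q_pow_nonneg (k : ℕ) : 0 ≤ q ^ k := pow_nonneg hq0.le k

lemma prod_F (N : ℕ) : F (q^2) = (∏ i ∈ Finset.range N, (1 + q^(i+2))) * F (q^(N+2)) := by
  induction N with
  | zero => simp
  | succ N ih =>
    have hz : (0:ℝ) ≤ q^(N+2) := pow_nonneg hq0.le _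
    have hz1 : q^(N+2) < 1 := q_pow_lt_one _ (by omega)
    have step : F (q^(N+2)) = (1 + q^(N+2)) * F (q^(N+3)) := by
      have := func_eq hz hz1
      have hq : q * q^(N+2) = q^(N+3) := by ring
      rw [hq] at this
      linarith [this]
    rw [Finset.prod_range_succ, ih, step]
    ring

lemma tendsto_F_top : Tendsto (fun N : ℕ => F (q^(N+2))) atTop (𝓝 1) := by
  have hz : ∀ N : ℕ, (0:ℝ) ≤ q^(N+2) := fun N => pow_nonneg hq0.le _
  have hz2 : ∀ N : ℕ, q^(N+2) ≤ 1/2 := by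
    intro N
    have := q_succ_le_half (N+1)
    simpa using this
  have hlow : ∀ N : ℕ, (1:ℝ) ≤ F (q^(N+2)) := fun N => F_ge_one (hz N) (by linarith [hz2 N])
  have hup : ∀ N : ℕ, F (q^(N+2)) ≤ 1 + 4 * q^(N+2) := fun N => F_le (hz N) (hz2 N)
  have hq2 : Tendsto (fun N : ℕ => q^(N+2)) atTop (𝓝 0) :=
    (tendsto_pow_atTop_nhds_zero_of_lt_one hq0.le hq1).comp (tendsto_add_atTop_nat 2)
  have hup' : Tendsto (fun N : ℕ => 1 + 4 * q^(N+2)) atTop (𝓝 1) := by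
    have := (hq2.const_mul 4).const_add 1
    simpa using this
  exact tendsto_of_tendsto_of_tendsto_of_le_of_le tendsto_const_nhds hup'
    (fun N => hlow N) (fun N => hup N)

lemma tendsto_T : Tendsto (fun N : ℕ => ∏ i ∈ Finset.range N, (1 + q^(i+2))) atTop (𝓝 (F (q^2))) := by
  have hne : ∀ N : ℕ, F (q^(N+2)) ≠ 0 := by
    intro N
    have hz : (0:ℝ) ≤ q^(N+2) := pow_nonneg hq0.le _
    have hz1 : q^(N+2) < 1 := q_pow_lt_one _ (by omega)
    have := F_ge_one hz hz1; linarith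
  have heq : ∀ N : ℕ, ∏ i ∈ Finset.range N, (1 + q^(i+2)) = F (q^2) / F (q^(N+2)) := by
    intro N
    rw [eq_div_iff (hne N)]
    exact (prod_F N).symm
  simp only [heq]
  have := Tendsto.div (tendsto_const_nhds : Tendsto (fun _ : ℕ => F (q^2)) atTop (𝓝 (F (q^2))))
    tendsto_F_top one_ne_zero
  rw [div_one] at this
  exact this

-- finite product identities
lemma prod_split (N : ℕ) :
    ∏ i ∈ Finset.range (2*N), (1 - q^(i+1))
      = (∏ i ∈ Finset.range N, (1 - q^(2*i+2))) * ∏ i ∈ Finset.range N, (1 - q^(2*i+1)) := by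
  induction N with
  | zero => simp
  | succ N ih =>
    have h2 : 2*(N+1) = (2*N) + 1 + 1 := by ring
    rw [h2, Finset.prod_range_succ, Finset.prod_range_succ, Finset.prod_range_succ,
      Finset.prod_range_succ, ih, show 2*N+1+1 = 2*N+2 from by ring]
    ring

lemma prod_sq (N : ℕ) :
    (∏ i ∈ Finset.range N, (1 + q^(i+1))) * ∏ i ∈ Finset.range N, (1 - q^(i+1))
      = ∏ i ∈ Finset.range N, (1 - q^(2*i+2)) := by
  rw [← Finset.prod_mul_distrib]
  apply Finset.prod_congr rfl
  intro i _
  have : q^(2*i+2) = q^(i+1) * q^(i+1) := by rw [← pow_add]; ring_nf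
  rw [this]; ring

lemma key_identity (N : ℕ) :
    (∏ i ∈ Finset.range N, (1 + q^(i+1))) * ((∏ i ∈ Finset.range N, (1 - q^(2*i+1)))
      * ∏ i ∈ Finset.range N, (1 - q^(i+1)))
      = ∏ i ∈ Finset.range (2*N), (1 - q^(i+1)) := by
  rw [prod_split]
  rw [← prod_sq]
  ring

end

end AuxB3

open AuxB3 in
open Finset in
/-- With `β = ∏_{i≥0} (1 - 3^{-(2i+1)})` and `β_m = β / ∏_{j=1}^m (3^j - 1)`,
one has `∑_{m=0}^∞ β_m / 3^m = 3/4`. -/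
theorem stmt_1 (β : ℝ) (hβ : β = ∏' i : ℕ, (1 - ((3 : ℝ) ^ (2 * i + 1))⁻¹))
    (βm : ℕ → ℝ) (hβm : ∀ m, βm m = β / ∏ j ∈ Finset.range m, ((3 : ℝ) ^ (j + 1) - 1)) :
    (∑' m : ℕ, βm m / 3 ^ m) = 3 / 4 := by
  -- rewrite β as a tprod of (1 - q^(2i+1))
  have hβ' : β = ∏' i : ℕ, (1 - q ^ (2*i+1)) := by
    rw [hβ]
    exact tprod_congr fun i => by rw [q_def, inv_pow]
  -- HasProd facts
  obtain ⟨hBprod, hβpos⟩ := hasProd_one_sub (x := fun i => q^(2*i+1))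
    (fun i => pow_nonneg hq0.le _) q_odd_le_half summable_q_odd
  obtain ⟨hQprod, hQpos⟩ := hasProd_one_sub (x := fun i => q^(i+1))
    (fun i => pow_nonneg hq0.le _) q_succ_le_half summable_q_succ
  set Q : ℝ := ∏' i : ℕ, (1 - q^(i+1)) with hQdef
  rw [← hβ'] at hBprod hβpos
  have hB : Tendsto (fun N => ∏ i ∈ Finset.range N, (1 - q^(2*i+1))) atTop (𝓝 β) :=
    hBprod.tendsto_prod_nat
  have hQ : Tendsto (fun N => ∏ i ∈ Finset.range N, (1 - q^(i+1))) atTop (𝓝 Q) :=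
    hQprod.tendsto_prod_nat
  have h2N : Tendsto (fun n : ℕ => 2*n) atTop atTop :=
    tendsto_atTop_atTop.mpr fun b => ⟨b, fun a ha => by omega⟩
  have hQ2 : Tendsto (fun N => ∏ i ∈ Finset.range (2*N), (1 - q^(i+1))) atTop (𝓝 Q) :=
    hQ.comp h2N
  -- limits of the plus-product
  have hdenpos : ∀ N : ℕ, 0 < (∏ i ∈ Finset.range N, (1 - q^(2*i+1)))
      * ∏ i ∈ Finset.range N, (1 - q^(i+1)) := by
    intro N
    apply mul_pos
    · exact Finset.prod_pos fun i _ => by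
        have := q_pow_lt_one (2*i+1) (by omega); linarith
    · exact Finset.prod_pos fun i _ => by
        have := q_pow_lt_one (i+1) (by omega); linarith
  have hPeq : ∀ N : ℕ, (∏ i ∈ Finset.range N, (1 + q^(i+1)))
      = (∏ i ∈ Finset.range (2*N), (1 - q^(i+1)))
        / ((∏ i ∈ Finset.range N, (1 - q^(2*i+1))) * ∏ i ∈ Finset.range N, (1 - q^(i+1))) := by
    intro N
    rw [eq_div_iff (hdenpos N).ne']
    exact key_identity N
  have hP : Tendsto (fun N => ∏ i ∈ Finset.range N, (1 + q^(i+1))) atTop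
      (𝓝 (Q / (β * Q))) := by
    simp only [hPeq]
    exact hQ2.div (hB.mul hQ) (mul_pos hβpos hQpos).ne'
  -- relate to F(q^2)
  have hP1 : Tendsto (fun N : ℕ => ∏ i ∈ Finset.range (N+1), (1 + q^(i+1))) atTop
      (𝓝 (Q / (β * Q))) := hP.comp (tendsto_add_atTop_nat 1)
  have hsplit : ∀ N : ℕ, ∏ i ∈ Finset.range (N+1), (1 + q^(i+1))
      = (∏ i ∈ Finset.range N, (1 + q^(i+2))) * (1 + q) := by
    intro N
    rw [Finset.prod_range_succ' (fun i => 1 + q^(i+1)) N]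
    simp
  simp only [hsplit] at hP1
  have hT1 : Tendsto (fun N : ℕ => (∏ i ∈ Finset.range N, (1 + q^(i+2))) * (1 + q)) atTop
      (𝓝 (F (q^2) * (1 + q))) := tendsto_T.mul_const _
  have hkey : F (q^2) * (1 + q) = Q / (β * Q) := tendsto_nhds_unique hT1 hP1
  have hβF : β * F (q^2) = 3/4 := by
    have hq : (1:ℝ) + q = 4/3 := by norm_num [q_def]
    have hQQ : Q / (β * Q) = β⁻¹ := by
      rw [mul_comm, div_mul_eq_div_div, div_self hQpos.ne', one_div]
    rw [hQQ, hq] at hkey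
    have h1 : β * (F (q^2) * (4/3)) = β * β⁻¹ := by rw [hkey]
    rw [mul_inv_cancel₀ hβpos.ne'] at h1
    ring_nf at h1 ⊢
    linarith
  -- rewrite the tsum
  have hterm : ∀ m : ℕ, βm m / 3 ^ m = β * c (q^2) m := by
    intro m
    rw [hβm m]
    have hprodpos : (0:ℝ) < ∏ j ∈ Finset.range m, ((3:ℝ)^(j+1) - 1) := by
      apply Finset.prod_pos
      intro j _
      have : (1:ℝ) < 3^(j+1) := one_lt_pow₀ (by norm_num) (by omega)
      linarith
    have h1 : (∏ j ∈ Finset.range m, q ^ j) * q ^ m = ∏ j ∈ Finset.range m, q ^ (j+1) := by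
      calc (∏ j ∈ Finset.range m, q ^ j) * q ^ m
          = (∏ j ∈ Finset.range m, q ^ j) * ∏ _j ∈ Finset.range m, q := by
            rw [Finset.prod_const, Finset.card_range]
        _ = ∏ j ∈ Finset.range m, (q ^ j * q) := (Finset.prod_mul_distrib).symm
        _ = ∏ j ∈ Finset.range m, q ^ (j+1) := Finset.prod_congr rfl fun j _ => by ring
    have hDm : D m = (∏ j ∈ Finset.range m, ((3:ℝ)^(j+1) - 1))
        * ((∏ j ∈ Finset.range m, q ^ j) * q ^ m) := by
      rw [h1, D, ← Finset.prod_mul_distrib]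
      apply Finset.prod_congr rfl
      intro j _
      have h3q : (3:ℝ)^(j+1) * q^(j+1) = 1 := by
        rw [q_def, ← mul_pow]; norm_num
      linear_combination -h3q
    have hNp : (0:ℝ) < ∏ j ∈ Finset.range m, q ^ j :=
      Finset.prod_pos fun j _ => pow_pos hq0 j
    have hqm : q^m = ((3:ℝ)^m)⁻¹ := by rw [q_def, inv_pow]
    have h3m : ((3:ℝ)^m) ≠ 0 := by positivity
    have hq2m : ((q:ℝ)^2)^m = q^m * q^m := by rw [← pow_mul, two_mul, pow_add]
    show β / (∏ j ∈ Finset.range m, ((3:ℝ)^(j+1) - 1)) / 3^m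
      = β * ((∏ j ∈ Finset.range m, q ^ j) * (q^2)^m / D m)
    rw [hDm, hq2m, hqm]
    field_simp
  rw [tsum_congr hterm, tsum_mul_left]
  rw [show F (q^2) = ∑' m, c (q^2) m from rfl] at hβF
  exact hβF
end

section
/- With β and β_m as above, one has ∑_{m=0}^∞ β_m = 1. -/
open Finset Filter Topology

noncomputable def st2q : ℝ := 3⁻¹
noncomputable def st2Q (n : ℕ) : ℝ := ∏ j ∈ Finset.range n, (1 - st2q ^ (j+1))

lemma st2q_pos : (0:ℝ) < st2q := by norm_num [st2q]
lemma st2q_lt_one : st2q < 1 := by norm_num [st2q]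
lemma st2q_pow_le (k : ℕ) : st2q ^ (k+1) ≤ 3⁻¹ := by
  calc st2q ^ (k+1) ≤ st2q ^ 1 := pow_le_pow_of_le_one st2q_pos.le st2q_lt_one.le (by omega)
    _ = 3⁻¹ := by norm_num [st2q]
lemma st2fac_pos (k : ℕ) : (0:ℝ) < 1 - st2q ^ (k+1) := by
  have := st2q_pow_le k; nlinarith
lemma st2fac_le_one (k : ℕ) : 1 - st2q ^ (k+1) ≤ 1 := by
  have : (0:ℝ) < st2q ^ (k+1) := pow_pos st2q_pos _
  linarith

lemma st2Q_pos (n : ℕ) : 0 < st2Q n := Finset.prod_pos fun j _ => st2fac_pos j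
lemma st2Q_succ (n : ℕ) : st2Q (n+1) = st2Q n * (1 - st2q ^ (n+1)) := Finset.prod_range_succ _ _
lemma st2Q_anti : Antitone st2Q := by
  apply antitone_nat_of_succ_le
  intro n
  rw [st2Q_succ]
  nlinarith [st2Q_pos n, st2fac_le_one n, st2fac_pos n]
lemma st2Q_le_one (n : ℕ) : st2Q n ≤ 1 := by
  have := st2Q_anti (Nat.zero_le n)
  simpa [st2Q] using this
lemma st2Q_ge_half (n : ℕ) : (2⁻¹ : ℝ) ≤ st2Q n := by
  have key : ∀ n : ℕ, 1 - ∑ j ∈ Finset.range n, st2q ^ (j+1) ≤ st2Q n := by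
    intro n
    induction n with
    | zero => simp [st2Q]
    | succ n ih =>
      rw [st2Q_succ, Finset.sum_range_succ]
      have h1 : (0:ℝ) ≤ ∑ j ∈ Finset.range n, st2q ^ (j+1) :=
        Finset.sum_nonneg fun j _ => (pow_pos st2q_pos _).le
      nlinarith [pow_pos st2q_pos (n+1), st2fac_pos n, st2Q_pos n, st2fac_le_one n,
        ih, st2q_pow_le n]
  refine le_trans ?_ (key n)
  have : ∑ j ∈ Finset.range n, st2q ^ (j+1) ≤ 2⁻¹ := by
    have h : ∑ j ∈ Finset.range n, st2q ^ (j+1) = st2q * ∑ j ∈ Finset.range n, st2q ^ j := by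
      rw [Finset.mul_sum]; exact Finset.sum_congr rfl fun j _ => by ring
    rw [h]
    have hg : ∑ j ∈ Finset.range n, st2q ^ j = (1 - st2q ^ n) / (1 - st2q) := by
      rw [geom_sum_eq (by norm_num [st2q])]
      rw [div_eq_div_iff (by norm_num [st2q]) (by norm_num [st2q])]
      ring
    rw [hg]
    have : (1 - st2q ^ n) ≤ 1 := by nlinarith [pow_pos st2q_pos n]
    rw [mul_div_assoc'] at *
    rw [div_le_iff₀ (by nlinarith [st2q_lt_one])]
    nlinarith [st2q_pos, st2q_lt_one, pow_pos st2q_pos n, st2q_pow_le 0]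
  linarith

noncomputable def st2g (n m : ℕ) : ℝ :=
  if m ≤ n then st2q ^ (m*(m+1)/2) * st2Q n / (st2Q m * st2Q (n-m)) else 0

noncomputable def st2t (m : ℕ) : ℝ := st2q ^ (m*(m+1)/2) / st2Q m

lemma st2g_zero (n : ℕ) : st2g n 0 = 1 := by
  simp only [st2g, Nat.zero_le, if_true, Nat.sub_zero]
  have h1 : st2Q 0 = 1 := by simp [st2Q]
  rw [h1, one_mul, pow_zero, one_mul]
  exact div_self (st2Q_pos n).ne'

lemma st2g_of_gt {n m : ℕ} (h : n < m) : st2g n m = 0 := by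
  simp [st2g, Nat.not_le.mpr h]

lemma st2g_nonneg (n m : ℕ) : 0 ≤ st2g n m := by
  unfold st2g
  split
  · exact div_nonneg (mul_nonneg (pow_nonneg st2q_pos.le _) (st2Q_pos n).le)
      (mul_nonneg (st2Q_pos m).le (st2Q_pos (n-m)).le)
  · exact le_refl 0

lemma st2g_pascal {n m : ℕ} (h : m ≤ n) :
    st2g (n+1) (m+1) = st2q ^ (m+1) * (st2g n (m+1) + st2g n m) := by
  have hexp : (m+1)*(m+2)/2 = m*(m+1)/2 + (m+1) := by
    have e : (m+1)*(m+2) = m*(m+1) + 2*(m+1) := by ring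
    have hd : 2 ∣ m*(m+1) := (Nat.even_mul_succ_self m).two_dvd
    omega
  rcases eq_or_lt_of_le h with rfl | hlt
  · -- m = n case
    rw [st2g_of_gt (Nat.lt_succ_self m)]
    simp only [st2g, le_refl, if_true, Nat.sub_self]
    have hQ0 : st2Q 0 = 1 := by simp [st2Q]
    rw [hQ0, hexp, pow_add]
    have h1 := (st2Q_pos m).ne'
    have h2 := (st2Q_pos (m+1)).ne'
    field_simp
    ring
  · -- m < n case
    have h1 : m + 1 ≤ n := hlt
    simp only [st2g, Nat.succ_le_succ h, if_true, h1, if_true, h, if_true,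
      Nat.succ_sub_succ]
    have e1 : st2Q (n+1) = st2Q n * (1 - st2q ^ (n+1)) := st2Q_succ n
    have e2 : st2Q (m+1) = st2Q m * (1 - st2q ^ (m+1)) := st2Q_succ m
    have e3 : st2Q (n - m) = st2Q (n - (m+1)) * (1 - st2q ^ (n-m)) := by
      have h4 : n - m = (n - (m+1)) + 1 := by omega
      rw [h4, st2Q_succ, ← h4]
    have hpow : st2q ^ (m+1) * st2q ^ (n-m) = st2q ^ (n+1) := by
      rw [← pow_add]; congr 1; omega
    rw [hexp, pow_add, e1, e2, e3, ← hpow]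
    have hQn := (st2Q_pos n).ne'
    have hQm := (st2Q_pos m).ne'
    have hQnm := (st2Q_pos (n - (m+1))).ne'
    have hfm := (st2fac_pos m).ne'
    have hfnm : (1 - st2q ^ (n - m)) ≠ 0 := by
      have : n - m = (n - m - 1) + 1 := by omega
      rw [this]; exact (st2fac_pos _).ne'
    field_simp
    ring

lemma st2_main_identity (n : ℕ) (x : ℝ) :
    ∏ i ∈ Finset.range n, (1 + x * st2q ^ (i+1)) =
      ∑ m ∈ Finset.range (n+1), st2g n m * x ^ m := by
  induction n generalizing x with
  | zero => simp [st2g_zero]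
  | succ n ih =>
    have hL : ∏ i ∈ Finset.range (n+1), (1 + x * st2q ^ (i+1)) =
        (1 + x * st2q) * ∏ i ∈ Finset.range n, (1 + (x * st2q) * st2q ^ (i+1)) := by
      rw [Finset.prod_range_succ' (fun i => 1 + x * st2q ^ (i+1)) n]
      have hfe : ∀ i : ℕ, (1 + x * st2q ^ (i+1+1)) = (1 + (x*st2q) * st2q ^ (i+1)) :=
        fun i => by rw [pow_succ]; ring
      simp only [hfe, zero_add, pow_one]
      ring
    rw [hL, ih (x * st2q)]
    -- RHS: peel off m = 0
    rw [Finset.sum_range_succ' (fun m => st2g (n+1) m * x ^ m)]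
    have hg0 : st2g (n+1) 0 * x ^ 0 = 1 := by rw [st2g_zero]; ring
    rw [hg0]
    have hPas : ∀ m ∈ Finset.range (n+1),
        st2g (n+1) (m+1) * x ^ (m+1) =
          st2g n (m+1) * (x*st2q)^(m+1) + (x * st2q) * (st2g n m * (x*st2q)^m) := by
      intro m hm
      rw [Finset.mem_range] at hm
      rw [st2g_pascal (by omega : m ≤ n)]
      ring
    rw [Finset.sum_congr rfl hPas, Finset.sum_add_distrib]
    have hfirst : ∑ m ∈ Finset.range (n+1), st2g n (m+1) * (x*st2q)^(m+1) =
        (∑ m ∈ Finset.range (n+1), st2g n m * (x*st2q)^m) - 1 := by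
      have := Finset.sum_range_succ' (fun m => st2g n m * (x*st2q)^m) (n+1)
      have hlast : ∑ m ∈ Finset.range (n+2), st2g n m * (x*st2q)^m =
          ∑ m ∈ Finset.range (n+1), st2g n m * (x*st2q)^m := by
        rw [Finset.sum_range_succ, st2g_of_gt (Nat.lt_succ_self n)]
        ring
      rw [hlast] at this
      have hg0' : st2g n 0 * (x*st2q)^0 = 1 := by rw [st2g_zero]; ring
      rw [hg0'] at this
      linarith
    rw [hfirst, ← Finset.mul_sum]
    ring

lemma st2t_nonneg (m : ℕ) : 0 ≤ st2t m :=
  div_nonneg (pow_nonneg st2q_pos.le _) (st2Q_pos m).le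

lemma st2t_le (m : ℕ) : st2t m ≤ 2 * st2q ^ m := by
  unfold st2t
  rw [div_le_iff₀ (st2Q_pos m)]
  have h1 : st2q ^ (m*(m+1)/2) ≤ st2q ^ m :=
    pow_le_pow_of_le_one st2q_pos.le st2q_lt_one.le (by
      have h2 : m * 2 ≤ m * (m+1) := by
        rcases Nat.eq_zero_or_pos m with rfl | hm
        · simp
        · exact Nat.mul_le_mul_left m (by omega)
      exact (Nat.le_div_iff_mul_le (by norm_num)).mpr h2)
  nlinarith [st2Q_ge_half m, pow_pos st2q_pos m, pow_pos st2q_pos (m*(m+1)/2)]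

lemma st2t_summable : Summable st2t := by
  apply Summable.of_nonneg_of_le st2t_nonneg st2t_le
  exact (summable_geometric_of_lt_one st2q_pos.le st2q_lt_one).mul_left 2

lemma st2g_le_t (n m : ℕ) : st2g n m ≤ st2t m := by
  unfold st2g st2t
  split
  · rename_i h
    rw [div_le_div_iff₀ (mul_pos (st2Q_pos m) (st2Q_pos (n-m))) (st2Q_pos m)]
    have h1 : st2Q n ≤ st2Q (n - m) := st2Q_anti (Nat.sub_le n m)
    have h2 : 0 < st2q ^ (m*(m+1)/2) := pow_pos st2q_pos _
    have h3 : st2q ^ (m*(m+1)/2) * st2Q n ≤ st2q ^ (m*(m+1)/2) * st2Q (n-m) :=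
      mul_le_mul_of_nonneg_left h1 h2.le
    nlinarith [st2Q_pos m]
  · exact st2t_nonneg m

noncomputable def st2A (n : ℕ) : ℝ := ∏ i ∈ Finset.range n, (1 + st2q ^ (i+1))
noncomputable def st2B (n : ℕ) : ℝ := ∏ i ∈ Finset.range n, (1 - st2q ^ (2*i+1))

lemma st2A_eq_sum (n : ℕ) : st2A n = ∑ m ∈ Finset.range (n+1), st2g n m := by
  have h := st2_main_identity n 1
  simpa [st2A] using h

lemma st2Q_tendsto : Tendsto st2Q atTop (𝓝 (⨅ n, st2Q n)) :=
  tendsto_atTop_ciInf st2Q_anti ⟨0, by rintro x ⟨n, rfl⟩; exact (st2Q_pos n).le⟩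

lemma st2L_half : (2⁻¹:ℝ) ≤ ⨅ n, st2Q n := le_ciInf st2Q_ge_half

lemma st2g_tendsto (m : ℕ) : Tendsto (fun n => st2g n m) atTop (𝓝 (st2t m)) := by
  set L := ⨅ n, st2Q n with hLdef
  have hL : (2⁻¹:ℝ) ≤ L := st2L_half
  have hQn : Tendsto st2Q atTop (𝓝 L) := st2Q_tendsto
  have hQnm : Tendsto (fun n => st2Q (n - m)) atTop (𝓝 L) :=
    hQn.comp (tendsto_sub_atTop_nat m)
  have h : Tendsto (fun n => st2t m * (st2Q n / st2Q (n - m))) atTop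
      (𝓝 (st2t m * (L / L))) := tendsto_const_nhds.mul (hQn.div hQnm (by linarith))
  rw [div_self (by linarith : L ≠ 0), mul_one] at h
  apply h.congr'
  filter_upwards [eventually_ge_atTop m] with n hn
  rw [st2g, if_pos hn, st2t]
  field_simp

lemma st2A_tendsto : Tendsto st2A atTop (𝓝 (∑' m, st2t m)) := by
  have h := tendsto_tsum_of_dominated_convergence (𝓕 := atTop)
    (f := fun (n m : ℕ) => st2g n m) (g := st2t) (bound := st2t)
    st2t_summable st2g_tendsto (Filter.Eventually.of_forall fun n m => by
      rw [Real.norm_eq_abs, abs_of_nonneg (st2g_nonneg n m)]; exact st2g_le_t n m)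
  apply h.congr
  intro n
  have : ∑' m, st2g n m = ∑ m ∈ Finset.range (n+1), st2g n m := by
    apply tsum_eq_sum
    intro m hm
    rw [Finset.mem_range, not_lt] at hm
    exact st2g_of_gt (by omega)
  rw [this, ← st2A_eq_sum]

lemma st2Q2 (n : ℕ) : st2Q (2*n) =
    st2B n * ∏ i ∈ Finset.range n, (1 - st2q ^ (2*i+2)) := by
  induction n with
  | zero => simp [st2Q, st2B]
  | succ n ih =>
    have e : 2*(n+1) = (2*n+1)+1 := by ring
    rw [e, st2Q_succ, st2Q_succ, ih]
    simp only [st2B, Finset.prod_range_succ]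
    have e1 : 2*n+1+1 = 2*n+2 := by omega
    rw [e1]
    ring

lemma st2AQ (n : ℕ) : st2A n * st2Q n = ∏ i ∈ Finset.range n, (1 - st2q ^ (2*i+2)) := by
  rw [st2A, st2Q, ← Finset.prod_mul_distrib]
  refine Finset.prod_congr rfl fun i _ => ?_
  have h : st2q ^ (2*i+2) = st2q ^ (i+1) * st2q ^ (i+1) := by
    rw [← pow_add]; congr 1; omega
  rw [h]; ring

lemma st2AB (n : ℕ) : st2A n * st2B n = st2Q (2*n) / st2Q n := by
  rw [st2Q2, ← st2AQ]
  field_simp [(st2Q_pos n).ne']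

lemma st2AB_tendsto_one : Tendsto (fun n => st2A n * st2B n) atTop (𝓝 1) := by
  set L := ⨅ n, st2Q n with hLdef
  have hL : (2⁻¹:ℝ) ≤ L := st2L_half
  have hQn : Tendsto st2Q atTop (𝓝 L) := st2Q_tendsto
  have h2n : Tendsto (fun n : ℕ => 2*n) atTop atTop :=
    tendsto_atTop_mono (fun n => by simp only [id_eq]; omega) tendsto_id
  have hQ2n : Tendsto (fun n => st2Q (2*n)) atTop (𝓝 L) := hQn.comp h2n
  have h := hQ2n.div hQn (by linarith : L ≠ 0)
  rw [div_self (by linarith : L ≠ 0)] at h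
  apply h.congr
  intro n
  exact (st2AB n).symm

lemma st2_log_summable : Summable (fun n : ℕ => Real.log (1 - st2q ^ (2*n+1))) := by
  apply Summable.of_norm_bounded (g := fun n : ℕ => st2q ^ n)
    (summable_geometric_of_lt_one st2q_pos.le st2q_lt_one)
  intro n
  set x := st2q ^ (2*n+1) with hx
  have hx0 : 0 < x := pow_pos st2q_pos _
  have hx3 : x ≤ 3⁻¹ := st2q_pow_le (2*n)
  have h1x : (0:ℝ) < 1 - x := by linarith
  have hlog0 : Real.log (1 - x) ≤ 0 := Real.log_nonpos (by linarith) (by linarith)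
  rw [Real.norm_eq_abs, abs_of_nonpos hlog0]
  have h2 : -Real.log (1 - x) = Real.log ((1-x)⁻¹) := (Real.log_inv _).symm
  have h3 : Real.log ((1-x)⁻¹) ≤ (1-x)⁻¹ - 1 := Real.log_le_sub_one_of_pos (by positivity)
  have h4 : (1-x)⁻¹ - 1 = x / (1-x) := by field_simp; ring
  have h5 : x / (1-x) ≤ (3/2) * x := by
    rw [div_le_iff₀ h1x]
    nlinarith
  have h6 : x = st2q ^ (n+1) * st2q ^ n := by rw [hx, ← pow_add]; congr 1; omega
  have h7 : (3/2) * x ≤ st2q ^ n := by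
    have := st2q_pow_le n
    have hqn : (0:ℝ) < st2q ^ n := pow_pos st2q_pos _
    rw [h6]
    nlinarith
  linarith [h2 ▸ h3, h4 ▸ h3]

lemma st2B_mult : Multipliable (fun i : ℕ => 1 - st2q ^ (2*i+1)) := by
  have := Real.multipliable_of_summable_log
    (f := fun i : ℕ => 1 - st2q ^ (2*i+1))
    (fun i => st2fac_pos (2*i))
    st2_log_summable
  exact this

/-- With `β = ∏_{i≥0} (1 - 3^{-(2i+1)})` and `β_m = β / ∏_{j=1}^m (3^j - 1)`,
one has `∑_{m=0}^∞ β_m = 1`. -/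
theorem stmt_2 (β : ℝ) (hβ : β = ∏' i : ℕ, (1 - ((3 : ℝ) ^ (2 * i + 1))⁻¹))
    (βm : ℕ → ℝ) (hβm : ∀ m, βm m = β / ∏ j ∈ Finset.range m, ((3 : ℝ) ^ (j + 1) - 1)) :
    (∑' m : ℕ, βm m) = 1 := by
  have hβ' : β = ∏' i : ℕ, (1 - st2q ^ (2*i+1)) := by
    rw [hβ]
    congr 1
    funext i
    rw [st2q, inv_pow]
  have hB : Tendsto st2B atTop (𝓝 β) := by
    rw [hβ']
    exact st2B_mult.hasProd.tendsto_prod_nat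
  have hkey : (∑' m, st2t m) * β = 1 :=
    tendsto_nhds_unique (st2A_tendsto.mul hB) st2AB_tendsto_one
  have hD : ∀ m, ∏ j ∈ Finset.range m, ((3:ℝ)^(j+1) - 1)
      = (3:ℝ)^(m*(m+1)/2) * st2Q m := by
    intro m
    induction m with
    | zero => simp [st2Q]
    | succ m ih =>
      rw [Finset.prod_range_succ, ih, st2Q_succ]
      have hexp : (m+1)*(m+2)/2 = m*(m+1)/2 + (m+1) := by
        have e : (m+1)*(m+2) = m*(m+1) + 2*(m+1) := by ring
        have hd : 2 ∣ m*(m+1) := (Nat.even_mul_succ_self m).two_dvd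
        omega
      rw [hexp, pow_add]
      have h3q : (3:ℝ)^(m+1) * st2q^(m+1) = 1 := by
        rw [st2q, inv_pow, mul_inv_cancel₀ (by positivity)]
      linear_combination ((3:ℝ)^(m*(m+1)/2) * st2Q m) * h3q
  have hβm' : ∀ m, βm m = β * st2t m := by
    intro m
    rw [hβm m, hD m, st2t]
    have h3e : st2q ^ (m*(m+1)/2) = ((3:ℝ)^(m*(m+1)/2))⁻¹ := by rw [st2q, inv_pow]
    rw [h3e]
    have h1 : ((3:ℝ)^(m*(m+1)/2)) ≠ 0 := by positivity
    have h2 : st2Q m ≠ 0 := (st2Q_pos m).ne'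
    field_simp
  calc (∑' m, βm m) = ∑' m, β * st2t m := tsum_congr hβm'
    _ = β * ∑' m, st2t m := tsum_mul_left
    _ = 1 := by rw [mul_comm]; exact hkey
end

section
/- With β and β_m as above, ∑_{m=0}^∞ 2β / ((3^{m+1} - 1) · ∏_{j=1}^m (3^j - 1)) = 2(1 - β). -/
open Finset Filter Topology

namespace Stmt3Aux

/-- `|log x| ≤ 2|x-1|` for `x ≥ 1/2`. -/
lemma log_abs_le {x : ℝ} (hx : 1/2 ≤ x) : |Real.log x| ≤ 2 * |x - 1| := by
  have hx0 : 0 < x := by linarith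
  rcases le_or_gt 1 x with h | h
  · have h1 : 0 ≤ Real.log x := Real.log_nonneg h
    have h2 : Real.log x ≤ x - 1 := Real.log_le_sub_one_of_pos hx0
    rw [abs_of_nonneg h1, abs_of_nonneg (by linarith)]
    linarith
  · have h1 : Real.log x ≤ 0 := Real.log_nonpos (le_of_lt hx0) (le_of_lt h)
    have h2 : Real.log x⁻¹ ≤ x⁻¹ - 1 := Real.log_le_sub_one_of_pos (by positivity)
    rw [Real.log_inv] at h2
    have hinv : x⁻¹ ≤ 2 := by
      rw [inv_le_comm₀ hx0 (by norm_num)]; linarith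
    rw [abs_of_nonpos h1, abs_of_nonpos (by linarith)]
    nlinarith [mul_nonneg (sub_nonneg.2 hinv) (sub_nonneg.2 h.le),
      mul_inv_cancel₀ (ne_of_gt hx0)]
  
lemma summable_log {f : ℕ → ℝ} (hf : ∀ n, 1/2 ≤ f n)
    (hs : Summable fun n => |f n - 1|) : Summable fun n => Real.log (f n) := by
  apply Summable.of_abs
  exact Summable.of_nonneg_of_le (fun n => abs_nonneg _)
    (fun n => log_abs_le (hf n)) (hs.mul_left 2)

lemma mult_of {f : ℕ → ℝ} (hf : ∀ n, 1/2 ≤ f n)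
    (hs : Summable fun n => |f n - 1|) : Multipliable f := by
  exact Real.multipliable_of_summable_log
    (fun n => lt_of_lt_of_le (by norm_num) (hf n))
    (summable_log hf hs)

lemma tprod_pos {f : ℕ → ℝ} (hf : ∀ n, 1/2 ≤ f n)
    (hs : Summable fun n => |f n - 1|) : 0 < ∏' n, f n := by
  have h2 := Real.rexp_tsum_eq_tprod (f := f)
    (fun n => lt_of_lt_of_le (by norm_num) (hf n))
    (summable_log hf hs)
  rw [← h2]
  exact Real.exp_pos _

noncomputable def a (m : ℕ) : ℝ := ∏ j ∈ Finset.range m, ((3 : ℝ) ^ (j + 1) - 1)⁻¹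

lemma two_le (j : ℕ) : (2 : ℝ) ≤ (3 : ℝ) ^ (j + 1) - 1 := by
  have : (3 : ℝ) ^ 1 ≤ (3 : ℝ) ^ (j + 1) :=
    pow_le_pow_right₀ (by norm_num) (by omega)
  simp only [pow_one] at this; linarith

lemma a_pos (m : ℕ) : 0 < a m :=
  Finset.prod_pos fun j _ => inv_pos.2 (by linarith [two_le j])

lemma a_le (m : ℕ) : a m ≤ (1/2 : ℝ) ^ m := by
  rw [a]
  refine le_trans (Finset.prod_le_prod (s := Finset.range m)
    (g := fun _ => (1/2:ℝ)) (fun j _ => inv_nonneg.2 (by linarith [two_le j])) (fun j _ => ?_)) ?_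
  · rw [inv_le_comm₀ (by linarith [two_le j]) (by norm_num)]
    linarith [two_le j]
  · rw [Finset.prod_const, Finset.card_range]

lemma a_zero : a 0 = 1 := by simp [a]

lemma a_rec (m : ℕ) :
    a (m + 1) = ((3:ℝ)⁻¹) ^ (m + 1) * a m + ((3:ℝ)⁻¹) ^ (m + 1) * a (m + 1) := by
  have h1 : a (m + 1) = a m * ((3 : ℝ) ^ (m + 1) - 1)⁻¹ := by
    rw [a, a, Finset.prod_range_succ]
  have hc : (0:ℝ) < (3:ℝ) ^ (m+1) := by positivity
  have hc1 : (0:ℝ) < (3:ℝ) ^ (m+1) - 1 := by linarith [two_le m]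
  rw [h1, inv_pow]
  field_simp
  ring

lemma summable_xa {x : ℝ} (h0 : 0 ≤ x) (h1 : x ≤ 1) :
    Summable fun m => x ^ m * a m := by
  refine Summable.of_nonneg_of_le
    (fun m => mul_nonneg (pow_nonneg h0 m) (a_pos m).le) (fun m => ?_)
    (summable_geometric_of_lt_one (by norm_num) (by norm_num : (1/2:ℝ) < 1))
  calc x ^ m * a m ≤ 1 * (1/2:ℝ)^m := by
        apply mul_le_mul (pow_le_one₀ h0 h1) (a_le m) (le_of_lt (a_pos m)) zero_le_one
    _ = (1/2:ℝ)^m := one_mul _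

noncomputable def S (x : ℝ) : ℝ := ∑' m, x ^ m * a m

lemma summable_xa' {x : ℝ} (h0 : 0 ≤ x) (h1 : x ≤ 1) :
    Summable fun m => x ^ (m+1) * a (m+1) := by
  refine Summable.of_nonneg_of_le
    (fun m => mul_nonneg (pow_nonneg h0 _) (a_pos _).le) (fun m => ?_)
    (summable_geometric_of_lt_one (by norm_num) (by norm_num : (1/2:ℝ) < 1))
  calc x ^ (m+1) * a (m+1) ≤ 1 * (1/2:ℝ)^(m+1) := by
        apply mul_le_mul (pow_le_one₀ h0 h1) (a_le _) (a_pos _).le zero_le_one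
    _ ≤ (1/2:ℝ)^m := by
        rw [one_mul]
        exact pow_le_pow_of_le_one (by norm_num) (by norm_num) (by omega)

lemma S_rec {x : ℝ} (h0 : 0 ≤ x) (h1 : x ≤ 1) : S x = (1 + x/3) * S (x/3) := by
  have h30 : (0:ℝ) ≤ x/3 := by linarith
  have h31 : x/3 ≤ 1 := by linarith
  have hs := summable_xa h0 h1
  have hs3 := summable_xa h30 h31
  have hshift : Summable fun m => x ^ (m+1) * a (m+1) := summable_xa' h0 h1
  have hshift3 : Summable fun m => (x/3) ^ (m+1) * a (m+1) := summable_xa' h30 h31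
  have hsm : Summable fun m => (x/3) ^ (m+1) * a m := by
    refine Summable.congr ((summable_xa h30 h31).mul_left (x/3)) fun m => ?_
    rw [pow_succ]; ring
  have hterm : ∀ m, x ^ (m+1) * a (m+1)
      = (x/3) ^ (m+1) * a m + (x/3) ^ (m+1) * a (m+1) := by
    intro m
    have := a_rec m
    calc x ^ (m+1) * a (m+1)
        = x ^ (m+1) * (((3:ℝ)⁻¹) ^ (m+1) * a m + ((3:ℝ)⁻¹) ^ (m+1) * a (m+1)) := by
          rw [← a_rec]
      _ = (x/3) ^ (m+1) * a m + (x/3) ^ (m+1) * a (m+1) := by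
          have key : (x/3) ^ (m+1) = x ^ (m+1) * ((3:ℝ)⁻¹) ^ (m+1) := by
            rw [div_pow, inv_pow, div_eq_mul_inv]
          rw [key]; ring
  have e0 : S x = 1 + ∑' m, x ^ (m+1) * a (m+1) := by
    rw [S, Summable.tsum_eq_zero_add hs, pow_zero, a_zero, mul_one]
  have e1 : ∑' m, x ^ (m+1) * a (m+1)
      = (∑' m, (x/3) ^ (m+1) * a m) + ∑' m, (x/3) ^ (m+1) * a (m+1) := by
    rw [← Summable.tsum_add hsm hshift3]
    exact tsum_congr hterm
  have e2 : ∑' m, (x/3) ^ (m+1) * a m = (x/3) * S (x/3) := by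
    rw [S, ← tsum_mul_left]
    refine tsum_congr fun m => ?_
    rw [pow_succ]; ring
  have e3 : ∑' m, (x/3) ^ (m+1) * a (m+1) = S (x/3) - 1 := by
    have : S (x/3) = 1 + ∑' m, (x/3) ^ (m+1) * a (m+1) := by
      rw [S, Summable.tsum_eq_zero_add hs3, pow_zero, a_zero, mul_one]
    linarith
  rw [e0, e1, e2, e3]; ring

lemma S_one (N : ℕ) :
    S 1 = (∏ n ∈ Finset.range N, (1 + ((3:ℝ)⁻¹) ^ (n+1))) * S (((3:ℝ)⁻¹) ^ N) := by
  induction N with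
  | zero => simp
  | succ N ih =>
    have hq0 : (0:ℝ) ≤ ((3:ℝ)⁻¹) ^ N := by positivity
    have hq1 : ((3:ℝ)⁻¹) ^ N ≤ 1 := pow_le_one₀ (by norm_num) (by norm_num)
    have hdiv : ((3:ℝ)⁻¹) ^ N / 3 = ((3:ℝ)⁻¹) ^ (N+1) := by
      rw [pow_succ]; ring
    rw [ih, S_rec hq0 hq1, hdiv, Finset.prod_range_succ]
    ring

lemma qpow_nonneg (n : ℕ) : (0:ℝ) ≤ ((3:ℝ)⁻¹) ^ n := by positivity

lemma qpow_le_third (n : ℕ) : ((3:ℝ)⁻¹) ^ (n+1) ≤ 1/3 := by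
  calc ((3:ℝ)⁻¹) ^ (n+1) = (3:ℝ)⁻¹ * ((3:ℝ)⁻¹) ^ n := by rw [pow_succ]; ring
    _ ≤ (3:ℝ)⁻¹ * 1 := by
        refine mul_le_mul_of_nonneg_left (pow_le_one₀ (by norm_num) (by norm_num)) (by norm_num)
    _ = 1/3 := by norm_num

lemma qpow_le_half_pow (n k : ℕ) (h : k ≤ n) : ((3:ℝ)⁻¹) ^ n ≤ (1/2:ℝ) ^ k := by
  calc ((3:ℝ)⁻¹) ^ n ≤ ((1/2:ℝ)) ^ n := by
        apply pow_le_pow_left₀ (by norm_num) (by norm_num)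
    _ ≤ (1/2:ℝ) ^ k := pow_le_pow_of_le_one (by norm_num) (by norm_num) h

lemma summable_abs_aux {g : ℕ → ℝ} (h : ∀ n, |g n - 1| ≤ (1/2:ℝ)^n) :
    Summable fun n => |g n - 1| :=
  Summable.of_nonneg_of_le (fun n => abs_nonneg _) h
    (summable_geometric_of_lt_one (by norm_num) (by norm_num : (1/2:ℝ) < 1))

noncomputable def T : ℝ := ∏' n : ℕ, (1 + ((3:ℝ)⁻¹) ^ (n+1))

lemma mult_u : Multipliable fun n : ℕ => 1 - ((3:ℝ)⁻¹) ^ (n+1) := by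
  refine mult_of (fun n => by linarith [qpow_le_third n]) (summable_abs_aux fun n => ?_)
  rw [abs_of_nonpos (by linarith [qpow_nonneg (n+1)])]
  simpa using qpow_le_half_pow (n+1) n (by omega)

lemma mult_v : Multipliable fun n : ℕ => 1 + ((3:ℝ)⁻¹) ^ (n+1) := by
  refine mult_of (fun n => by linarith [qpow_nonneg (n+1)]) (summable_abs_aux fun n => ?_)
  rw [add_sub_cancel_left, abs_of_nonneg (qpow_nonneg (n+1))]
  exact qpow_le_half_pow (n+1) n (by omega)

lemma mult_ue : Multipliable fun k : ℕ => 1 - ((3:ℝ)⁻¹) ^ (2*k+1) := by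
  refine mult_of (fun k => by
      have := qpow_le_third (2*k)
      linarith) (summable_abs_aux fun k => ?_)
  rw [abs_of_nonpos (by linarith [qpow_nonneg (2*k+1)])]
  simpa using qpow_le_half_pow (2*k+1) k (by omega)

lemma mult_uo : Multipliable fun k : ℕ => 1 - ((3:ℝ)⁻¹) ^ (2*k+1+1) := by
  refine mult_of (fun k => by
      have := qpow_le_third (2*k+1); linarith) (summable_abs_aux fun k => ?_)
  rw [abs_of_nonpos (by linarith [qpow_nonneg (2*k+1+1)])]
  simpa using qpow_le_half_pow (2*k+1+1) k (by omega)

lemma E_pos : 0 < ∏' k : ℕ, (1 - ((3:ℝ)⁻¹) ^ (2*k+1+1)) := by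
  refine tprod_pos (fun k => by have := qpow_le_third (2*k+1); linarith)
    (summable_abs_aux fun k => ?_)
  rw [abs_of_nonpos (by linarith [qpow_nonneg (2*k+1+1)])]
  simpa using qpow_le_half_pow (2*k+1+1) k (by omega)

lemma beta_T (β : ℝ) (hβ : β = ∏' i : ℕ, (1 - ((3 : ℝ) ^ (2 * i + 1))⁻¹)) :
    β * T = 1 := by
  have hβ' : β = ∏' k : ℕ, (1 - ((3:ℝ)⁻¹) ^ (2*k+1)) := by
    rw [hβ]; exact tprod_congr fun i => by rw [inv_pow]
  have h1 : (∏' k : ℕ, (1 - ((3:ℝ)⁻¹) ^ (2*k+1)))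
      * (∏' k : ℕ, (1 - ((3:ℝ)⁻¹) ^ (2*k+1+1)))
      = ∏' n : ℕ, (1 - ((3:ℝ)⁻¹) ^ (n+1)) :=
    tprod_even_mul_odd (f := fun n => 1 - ((3:ℝ)⁻¹) ^ (n+1)) mult_ue mult_uo
  have h2 : T * (∏' n : ℕ, (1 - ((3:ℝ)⁻¹) ^ (n+1)))
      = ∏' k : ℕ, (1 - ((3:ℝ)⁻¹) ^ (2*k+1+1)) := by
    rw [T, ← Multipliable.tprod_mul mult_v mult_u]
    refine tprod_congr fun n => ?_
    have h3 : (1 + ((3:ℝ)⁻¹)^(n+1)) * (1 - ((3:ℝ)⁻¹)^(n+1))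
        = 1 - ((3:ℝ)⁻¹)^(n+1) * ((3:ℝ)⁻¹)^(n+1) := by ring
    rw [h3, ← pow_add]
    congr 2
    omega
  have hE := E_pos
  have : (β * T) * (∏' k : ℕ, (1 - ((3:ℝ)⁻¹) ^ (2*k+1+1)))
      = 1 * (∏' k : ℕ, (1 - ((3:ℝ)⁻¹) ^ (2*k+1+1))) := by
    rw [one_mul]
    calc (β * T) * (∏' k : ℕ, (1 - ((3:ℝ)⁻¹) ^ (2*k+1+1)))
        = T * (β * (∏' k : ℕ, (1 - ((3:ℝ)⁻¹) ^ (2*k+1+1)))) := by ring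
      _ = T * (∏' n : ℕ, (1 - ((3:ℝ)⁻¹) ^ (n+1))) := by rw [hβ', h1]
      _ = _ := h2
  exact mul_right_cancel₀ (ne_of_gt hE) this

lemma tsum_half : ∑' m : ℕ, (1/2:ℝ) ^ (m+1) = 1 := by
  have h : ∀ m : ℕ, (1/2:ℝ) ^ (m+1) = (1/2) * (1/2)^m := fun m => by rw [pow_succ]; ring
  rw [tsum_congr h, tsum_mul_left, tsum_geometric_of_lt_one (by norm_num) (by norm_num)]
  norm_num

lemma S_q_bounds (N : ℕ) : 1 ≤ S (((3:ℝ)⁻¹)^N) ∧ S (((3:ℝ)⁻¹)^N) ≤ 1 + ((3:ℝ)⁻¹)^N := by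
  set x : ℝ := ((3:ℝ)⁻¹)^N with hx
  have h0 : 0 ≤ x := qpow_nonneg N
  have h1 : x ≤ 1 := pow_le_one₀ (by norm_num) (by norm_num)
  have e0 : S x = 1 + ∑' m, x ^ (m+1) * a (m+1) := by
    rw [S, Summable.tsum_eq_zero_add (summable_xa h0 h1), pow_zero, a_zero, mul_one]
  constructor
  · rw [e0]
    have : 0 ≤ ∑' m, x ^ (m+1) * a (m+1) :=
      tsum_nonneg fun m => mul_nonneg (pow_nonneg h0 _) (a_pos _).le
    linarith
  · rw [e0]
    have hb : ∑' m, x ^ (m+1) * a (m+1) ≤ ∑' m : ℕ, x * (1/2:ℝ)^(m+1) := by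
      refine Summable.tsum_le_tsum (fun m => ?_) (summable_xa' h0 h1) ?_
      · refine mul_le_mul ?_ (a_le _) (a_pos _).le h0
        exact pow_le_of_le_one h0 h1 (by omega)
      · exact Summable.mul_left x ((summable_geometric_of_lt_one (by norm_num)
          (by norm_num : (1/2:ℝ) < 1)).comp_injective (add_left_injective 1))
    have hx1 : ∑' m : ℕ, x * (1/2:ℝ)^(m+1) = x := by
      rw [tsum_mul_left, tsum_half, mul_one]
    linarith [hb, hx1 ▸ hb]

lemma S_one_eq_T : S 1 = T := by
  have htend : Tendsto (fun N => ∏ n ∈ Finset.range N, (1 + ((3:ℝ)⁻¹)^(n+1)))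
      atTop (𝓝 T) := mult_v.hasProd.tendsto_prod_nat
  have hq0 : Tendsto (fun N : ℕ => ((3:ℝ)⁻¹)^N) atTop (𝓝 0) :=
    tendsto_pow_atTop_nhds_zero_of_lt_one (by norm_num) (by norm_num)
  have hS : Tendsto (fun N => S (((3:ℝ)⁻¹)^N)) atTop (𝓝 1) := by
    have hup : Tendsto (fun N : ℕ => 1 + ((3:ℝ)⁻¹)^N) atTop (𝓝 1) := by
      simpa using hq0.const_add 1
    exact tendsto_of_tendsto_of_tendsto_of_le_of_le tendsto_const_nhds hup
      (fun N => (S_q_bounds N).1) (fun N => (S_q_bounds N).2)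
  have hconst : Tendsto (fun _ : ℕ => S 1) atTop (𝓝 (T * 1)) := by
    have : (fun N : ℕ => S 1)
        = fun N => (∏ n ∈ Finset.range N, (1 + ((3:ℝ)⁻¹)^(n+1))) * S (((3:ℝ)⁻¹)^N) :=
      funext fun N => S_one N
    rw [this]
    exact htend.mul hS
  have := tendsto_nhds_unique hconst tendsto_const_nhds
  rw [← this, mul_one]

end Stmt3Aux

open Stmt3Aux in
/-- With `β = ∏_{i≥0} (1 - 3^{-(2i+1)})`, one has
`∑_{m=0}^∞ 2β / ((3^{m+1} - 1) ∏_{j=1}^m (3^j - 1)) = 2(1 - β)`. -/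
theorem stmt_3 (β : ℝ) (hβ : β = ∏' i : ℕ, (1 - ((3 : ℝ) ^ (2 * i + 1))⁻¹)) :
    (∑' m : ℕ, 2 * β /
        (((3 : ℝ) ^ (m + 1) - 1) * ∏ j ∈ Finset.range m, ((3 : ℝ) ^ (j + 1) - 1))) =
      2 * (1 - β) := by
  have hβT := beta_T β hβ
  have hterm : ∀ m : ℕ, 2 * β /
      (((3 : ℝ) ^ (m + 1) - 1) * ∏ j ∈ Finset.range m, ((3 : ℝ) ^ (j + 1) - 1))
      = (2 * β) * a (m+1) := by
    intro m
    have ha : a (m+1)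
        = ((∏ j ∈ Finset.range m, ((3 : ℝ) ^ (j + 1) - 1)) * ((3:ℝ)^(m+1) - 1))⁻¹ := by
      rw [a, Finset.prod_inv_distrib, Finset.prod_range_succ]
    rw [ha, div_eq_mul_inv]
    congr 1
    rw [mul_comm]
  rw [tsum_congr hterm, tsum_mul_left]
  have hS1 : S 1 = 1 + ∑' m, a (m+1) := by
    have := Summable.tsum_eq_zero_add (f := fun m => (1:ℝ)^m * a m)
      (summable_xa zero_le_one le_rfl)
    simp only [one_pow, pow_zero, a_zero, mul_one, one_mul] at this ⊢
    simpa [S] using this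
  have : ∑' m, a (m+1) = T - 1 := by
    have := hS1
    rw [S_one_eq_T] at this
    linarith
  rw [this]
  nlinarith [hβT]
end

section
/- Let K = ℚ(ζ_3), λ = 1 − ζ_3, and let π ∈ ℤ[ζ_3] be a prime with π ≡ 1 mod λ² but π ≢ 1 mod λ³. Then ζ_3 is not a cube in the completion K_π. -/
open NumberField IsDedekindDomain
open IsDedekindDomain.HeightOneSpectrum Polynomial


lemma nine_dvd_card_sub_one {F : Type*} [Field F] [Fintype F] (x y : F)
    (h3 : x ^ 3 = y) (hy3 : y ^ 3 = 1) (hyne : y ≠ 1) : 9 ∣ Fintype.card F - 1 := by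
  classical
  have hx9 : x ^ 9 = 1 := by
    rw [show (9 : ℕ) = 3 * 3 from rfl, pow_mul, h3, hy3]
  have hxu : IsUnit x := by
    apply IsUnit.of_mul_eq_one (x ^ 8)
    rw [← pow_succ']
    exact hx9
  obtain ⟨u, hu⟩ := hxu
  have hu9 : u ^ 9 = 1 := by
    ext
    push_cast [hu]
    exact hx9
  have ho : orderOf u = 9 := by
    have hdvd : orderOf u ∣ 9 := orderOf_dvd_of_pow_eq_one hu9
    have hnot3 : ¬ orderOf u ∣ 3 := by
      intro h
      have hu3 : u ^ 3 = 1 := orderOf_dvd_iff_pow_eq_one.mp h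
      apply hyne
      rw [← h3, ← hu]
      have := congrArg (Units.val) hu3
      push_cast at this
      simpa using this
    rcases (Nat.dvd_prime_pow (by norm_num : Nat.Prime 3)).mp
      (show orderOf u ∣ 3 ^ 2 by simpa using hdvd) with ⟨i, hi, hoi⟩
    interval_cases i
    · exact absurd (by simp [hoi]) hnot3
    · exact absurd (by simp [hoi]) hnot3
    · simpa using hoi
  rw [← Fintype.card_units, ← ho]
  exact orderOf_dvd_card

section Core

variable {K : Type*} [Field K] [NumberField K] [IsCyclotomicExtension {3} ℚ K]

set_option maxHeartbeats 1000000 in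
set_option synthInstance.maxHeartbeats 400000 in
lemma core_contradiction (ζ : K) (hζ : IsPrimitiveRoot ζ 3)
    (z : 𝓞 K) (hz : algebraMap (𝓞 K) K z = ζ)
    (π : 𝓞 K) (hπ : Prime π)
    (h1 : (1 - z) ^ 2 ∣ π - 1) (h2 : ¬ (1 - z) ^ 3 ∣ π - 1)
    (b : 𝓞 K) (hb : π ∣ b ^ 3 - z) : False := by
  classical
  have hinj : Function.Injective (algebraMap (𝓞 K) K) :=
    NumberField.RingOfIntegers.coe_injective
  have hζ3 : ζ ^ 3 = 1 := hζ.pow_eq_one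
  have hζne : ζ ≠ 1 := hζ.ne_one (by norm_num)
  have hζq : ζ ^ 2 + ζ + 1 = 0 := by
    have h0 : (ζ - 1) * (ζ ^ 2 + ζ + 1) = 0 := by linear_combination hζ3
    rcases mul_eq_zero.mp h0 with h | h
    · exact absurd (sub_eq_zero.mp h) hζne
    · exact h
  have hz3 : z ^ 3 = 1 := hinj (by rw [map_pow, hz, map_one]; exact hζ3)
  have hzq : z ^ 2 + z + 1 = 0 := by
    apply hinj
    rw [map_add, map_add, map_pow, hz, map_one, map_zero]
    exact hζq
  have hzne1 : z ≠ 1 := by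
    rintro rfl; rw [map_one] at hz; exact hζne hz.symm
  set lam : 𝓞 K := 1 - z with hlam
  have hlam0 : lam ≠ 0 := sub_ne_zero.mpr (Ne.symm hzne1)
  have hlamu : ¬ IsUnit lam := fun h => h2 ((h.pow 3).dvd)
  have hπ0 : π ≠ 0 := hπ.ne_zero
  have hπlam : ¬ π ∣ lam := by
    intro h
    have h1' : π ∣ π - 1 := dvd_trans (dvd_trans (dvd_pow h (by norm_num)) h1) dvd_rfl
    have : π ∣ (1 : 𝓞 K) := by
      have := dvd_sub (dvd_refl π) h1'
      simpa using this
    exact hπ.not_unit (isUnit_of_dvd_one this)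
  -- Galois part
  haveI : IsGalois ℚ K := IsCyclotomicExtension.isGalois (S := {3}) (K := ℚ) (L := K)
  have hirr : Irreducible (cyclotomic 3 ℚ) := cyclotomic.irreducible_rat (by norm_num)
  have hrank : Module.finrank ℚ K = 2 := by
    have := IsCyclotomicExtension.finrank K (n := 3) (by exact hirr)
    simpa [Nat.totient_prime (by norm_num : Nat.Prime 3)] using this
  have hcard : Fintype.card (K ≃ₐ[ℚ] K) = 2 := by
    rw [Fintype.card_eq_nat_card, IsGalois.card_aut_eq_finrank, hrank]
  obtain ⟨τ, hτ⟩ : ∃ τ : K ≃ₐ[ℚ] K, τ ≠ 1 :=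
    Fintype.exists_ne_of_one_lt_card (by omega) 1
  have hζ' : IsPrimitiveRoot ζ 3 := hζ
  have hτζ : τ ζ = ζ ^ 2 := by
    have h3 : (τ ζ) ^ 3 = 1 := by rw [← map_pow, hζ3, map_one]
    have hne1 : τ ζ ≠ 1 := by
      intro h
      exact hζne (τ.injective (h.trans (map_one τ).symm))
    have hq : (τ ζ) ^ 2 + τ ζ + 1 = 0 := by
      have h0 : (τ ζ - 1) * ((τ ζ) ^ 2 + τ ζ + 1) = 0 := by linear_combination h3
      rcases mul_eq_zero.mp h0 with h | h
      · exact absurd (sub_eq_zero.mp h) hne1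
      · exact h
    have hneζ : τ ζ ≠ ζ := by
      intro h
      apply hτ
      have hext : (τ : K →ₐ[ℚ] K) = (AlgHom.id ℚ K) := by
        apply (hζ'.powerBasis ℚ).algHom_ext
        rw [IsPrimitiveRoot.powerBasis_gen]
        simpa using h
      ext x
      have := AlgHom.congr_fun hext x
      simpa using this
    have h0 : (τ ζ - ζ) * (τ ζ + ζ + 1) = 0 := by linear_combination hq - hζq
    rcases mul_eq_zero.mp h0 with h | h
    · exact absurd (sub_eq_zero.mp h) hneζ
    · linear_combination h - hζq
  set σ : (𝓞 K) ≃ₐ[ℤ] (𝓞 K) := galRestrict ℤ ℚ K (𝓞 K) τ with hσdef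
  have hσ : ∀ t : 𝓞 K, algebraMap (𝓞 K) K (σ t) = τ (algebraMap (𝓞 K) K t) :=
    fun t => algebraMap_galRestrict_apply ℤ τ t
  have hσz : σ z = z ^ 2 := by
    apply hinj
    rw [hσ, hz, hτζ, map_pow, hz]
  -- norm identity
  have hτne : (1 : K ≃ₐ[ℚ] K) ∉ ({τ} : Finset (K ≃ₐ[ℚ] K)) := by
    simp only [Finset.mem_singleton]
    exact fun h => hτ h.symm
  have huniv : (Finset.univ : Finset (K ≃ₐ[ℚ] K)) = ({1, τ} : Finset (K ≃ₐ[ℚ] K)) := by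
    symm
    apply Finset.eq_univ_of_card
    rw [Finset.card_insert_of_notMem hτne, Finset.card_singleton, hcard]
  have hnorm : algebraMap ℤ (𝓞 K) (Algebra.norm ℤ π) = π * σ π := by
    apply hinj
    rw [map_mul, hσ]
    have lhs : algebraMap (𝓞 K) K (algebraMap ℤ (𝓞 K) (Algebra.norm ℤ π))
        = algebraMap ℚ K ((Algebra.norm ℤ π : ℚ)) := by
      rw [← IsScalarTower.algebraMap_apply, IsScalarTower.algebraMap_apply ℤ ℚ K]
      norm_num
    rw [lhs, Algebra.coe_norm_int, Algebra.norm_eq_prod_automorphisms, huniv,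
      Finset.prod_insert hτne, Finset.prod_singleton]
    rfl
  -- conjugation fixes residues mod lam
  haveI hp3 : Fact (Nat.Prime ((3 : ℕ+) : ℕ)) := ⟨by norm_num⟩
  have hgen : hζ'.integralPowerBasis.gen = z := by
    apply hinj
    rw [hζ'.integralPowerBasis_gen, hz]
    rfl
  have hconj : ∀ t : 𝓞 K, lam ∣ σ t - t := by
    intro t
    obtain ⟨f, -, hf⟩ := hζ'.integralPowerBasis.exists_eq_aeval t
    rw [hgen] at hf
    have hmap : σ t = aeval (z ^ 2) f := by
      rw [hf, ← hσz]
      exact (aeval_algHom_apply (σ : 𝓞 K →ₐ[ℤ] 𝓞 K) z f).symm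
    have heval : ∀ w : 𝓞 K, aeval w f = (f.map (algebraMap ℤ (𝓞 K))).eval w := by
      intro w; rw [aeval_def, eval_map]
    have hdvd : (z ^ 2 - z) ∣ aeval (z ^ 2) f - aeval z f := by
      rw [heval, heval]
      exact sub_dvd_eval_sub _ _ _
    have hlamdvd : lam ∣ z ^ 2 - z := ⟨-z, by rw [hlam]; ring⟩
    rw [hmap, hf]
    exact dvd_trans hlamdvd hdvd
  -- finite field part
  have hsppr : (Ideal.span {π}).IsPrime := (Ideal.span_singleton_prime hπ0).mpr hπ
  have hspbot : Ideal.span {π} ≠ ⊥ := by simpa [Ideal.span_singleton_eq_bot] using hπ0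
  haveI := hsppr
  haveI hmax : (Ideal.span {π}).IsMaximal := Ideal.IsPrime.isMaximal hsppr hspbot
  letI : Field (𝓞 K ⧸ Ideal.span {π}) := Ideal.Quotient.field _
  letI : Fintype (𝓞 K ⧸ Ideal.span {π}) := @Fintype.ofFinite _ (Ideal.finiteQuotientOfFreeOfNeBot _ hspbot)
  have hdvd0 : ∀ w : 𝓞 K, π ∣ w → Ideal.Quotient.mk (Ideal.span {π}) w = 0 := by
    intro w hw
    rw [Ideal.Quotient.eq_zero_iff_mem, Ideal.mem_span_singleton]
    exact hw
  have hubz : (Ideal.Quotient.mk (Ideal.span {π}) b) ^ 3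
      = Ideal.Quotient.mk (Ideal.span {π}) z := by
    rw [← map_pow, ← sub_eq_zero, ← map_sub]
    exact hdvd0 _ hb
  have hQz3 : (Ideal.Quotient.mk (Ideal.span {π}) z) ^ 3 = 1 := by
    rw [← map_pow, hz3, map_one]
  have hQzne : Ideal.Quotient.mk (Ideal.span {π}) z ≠ 1 := by
    intro h
    apply hπlam
    have h0 : Ideal.Quotient.mk (Ideal.span {π}) (1 - z) = 0 := by
      rw [map_sub, map_one, h, sub_self]
    rw [Ideal.Quotient.eq_zero_iff_mem, Ideal.mem_span_singleton] at h0
    rw [hlam]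
    exact h0
  have h9card : 9 ∣ Fintype.card (𝓞 K ⧸ Ideal.span {π}) - 1 :=
    nine_dvd_card_sub_one _ _ hubz hQz3 hQzne
  have hcardeq : Fintype.card (𝓞 K ⧸ Ideal.span {π}) = (Algebra.norm ℤ π).natAbs := by
    rw [← Ideal.absNorm_span_singleton, Ideal.absNorm_apply, Submodule.cardQuot_apply,
      Nat.card_eq_fintype_card]
  have hcpos : 0 < Fintype.card (𝓞 K ⧸ Ideal.span {π}) := Fintype.card_pos
  set m : ℤ := Algebra.norm ℤ π with hm
  have h9m : (9 : ℤ) ∣ (m.natAbs : ℤ) - 1 := by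
    obtain ⟨k, hk⟩ := h9card
    refine ⟨(k : ℤ), ?_⟩
    rw [← hcardeq]
    omega
  -- key identities
  obtain ⟨t, ht⟩ := h1
  have hid : π * σ π - 1 = lam ^ 2 * (t + z * σ t) + z * lam ^ 4 * (t * σ t) := by
    have hπ' : π = 1 + lam ^ 2 * t := by linear_combination ht
    have hσπ : σ π = 1 + (1 - z ^ 2) ^ 2 * σ t := by
      calc σ π = σ (1 + lam ^ 2 * t) := by rw [← hπ']
        _ = 1 + (σ lam) ^ 2 * σ t := by rw [map_add, map_one, map_mul, map_pow]
        _ = 1 + (1 - z ^ 2) ^ 2 * σ t := by rw [hlam, map_sub, map_one, hσz]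
    rw [hσπ, hπ', hlam]
    linear_combination (z ^ 4 * t * (σ t) - 4 * z ^ 3 * t * (σ t) + 6 * z ^ 2 * t * (σ t)
      + z ^ 2 * (σ t) - 4 * z * t * (σ t) - 2 * z * (σ t) + t * (σ t) + (σ t)) * hzq
  have h9lam : lam ^ 4 * z = 9 := by
    rw [hlam]
    linear_combination (z ^ 3 - 5 * z ^ 2 + 10 * z - 9) * hzq
  have h3lam : (3 : 𝓞 K) = lam ^ 2 * (-z ^ 2) := by
    rw [hlam]
    linear_combination (z ^ 2 - 3 * z + 3) * hzq
  have hlam9 : lam ^ 4 ∣ (9 : 𝓞 K) := ⟨z, h9lam.symm⟩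
  -- final contradiction
  have key : lam ∣ t := by
    have hmain : lam ^ 2 ∣ t + z * σ t := by
      have h4 : lam ^ 4 ∣ π * σ π - 1 ∨ lam ^ 4 ∣ π * σ π + 1 := by
        rcases Int.natAbs_eq m with hcase | hcase
        · left
          obtain ⟨k, hk⟩ := h9m
          refine dvd_trans hlam9 ⟨algebraMap ℤ (𝓞 K) k, ?_⟩
          have he : π * σ π - 1 = algebraMap ℤ (𝓞 K) (m - 1) := by
            rw [map_sub, hnorm, map_one]
          rw [he, show m - 1 = 9 * k by omega, map_mul]
          norm_num
        · right
          obtain ⟨k, hk⟩ := h9m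
          refine dvd_trans hlam9 ⟨algebraMap ℤ (𝓞 K) (-k), ?_⟩
          have he : π * σ π + 1 = algebraMap ℤ (𝓞 K) (m + 1) := by
            rw [map_add, hnorm, map_one]
          rw [he, show m + 1 = 9 * (-k) by omega, map_mul]
          norm_num
      rcases h4 with h4 | h4
      · rw [hid] at h4
        have h5 : lam ^ 4 ∣ lam ^ 2 * (t + z * σ t) := by
          have := dvd_sub h4 (⟨z * (t * σ t), by ring⟩ : lam ^ 4 ∣ z * lam ^ 4 * (t * σ t))
          simpa using this
        obtain ⟨w, hw⟩ := h5
        refine ⟨w, ?_⟩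
        have he : lam ^ 2 * (t + z * σ t) = lam ^ 2 * (lam ^ 2 * w) := by
          rw [hw]; ring
        exact mul_left_cancel₀ (pow_ne_zero 2 hlam0) he
      · exfalso
        have h2dvd : lam ^ 2 ∣ (2 : 𝓞 K) := by
          have h6 : π * σ π + 1 = 2 + (lam ^ 2 * (t + z * σ t) + z * lam ^ 4 * (t * σ t)) := by
            linear_combination hid
          rw [h6] at h4
          have h7 : lam ^ 2 ∣ lam ^ 2 * (t + z * σ t) + z * lam ^ 4 * (t * σ t) :=
            dvd_add (dvd_mul_right _ _) ⟨z * lam ^ 2 * (t * σ t), by ring⟩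
          have := dvd_sub (dvd_trans (pow_dvd_pow lam (by norm_num)) h4) h7
          simpa using this
        have h3dvd : lam ^ 2 ∣ (3 : 𝓞 K) := ⟨-z ^ 2, h3lam⟩
        have h1dvd : lam ^ 2 ∣ (1 : 𝓞 K) := by
          have h32 := dvd_sub h3dvd h2dvd
          have : (3 : 𝓞 K) - 2 = 1 := by norm_num
          rwa [this] at h32
        exact hlamu ((isUnit_pow_iff (by norm_num : (2:ℕ) ≠ 0)).mp (isUnit_of_dvd_one h1dvd))
    have hlmain : lam ∣ t + z * σ t := dvd_trans (dvd_pow_self lam (by norm_num)) hmain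
    have h2t : lam ∣ 2 * t := by
      have he : 2 * t = (t + z * σ t) - (σ t - t) - (z - 1) * σ t := by ring
      rw [he]
      exact dvd_sub (dvd_sub hlmain (hconj t)) ⟨-σ t, by rw [hlam]; ring⟩
    have h3t : lam ∣ 3 * t := dvd_mul_of_dvd_left ⟨lam * (-z ^ 2), by linear_combination h3lam⟩ t
    have : lam ∣ t := by
      have := dvd_sub h3t h2t
      simpa [show (3 : 𝓞 K) * t - 2 * t = t by ring] using this
    exact this
  obtain ⟨w, hw⟩ := key
  exact h2 ⟨w, by rw [ht, hw]; ring⟩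

end Core



lemma approx_lemma {R : Type*} [CommRing R] [IsDedekindDomain R] {K : Type*} [Field K]
    [Algebra R K] [IsFractionRing R K]
    (v : HeightOneSpectrum R) {π : R} (hπ : Prime π)
    (hv : v.asIdeal = Ideal.span {π}) (a : K) (ha : v.valuation K a ≤ 1) :
    ∃ b : R, v.valuation K (a - algebraMap R K b) < 1 := by
  obtain ⟨r, s, hs, hrs⟩ := IsFractionRing.div_surjective (A := R) a
  have hs0 : s ≠ 0 := nonZeroDivisors.ne_zero hs
  obtain ⟨n, s', hs'm, rfl⟩ := WfDvdMonoid.max_power_factor hs0 hπ.irreducible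
  have hπ0 : π ≠ 0 := hπ.ne_zero
  have hs'0 : s' ≠ 0 := by
    rintro rfl
    simp at hs0
  have hvπ : v.intValuation π = Multiplicative.ofAdd (-1 : ℤ) :=
    v.intValuation_singleton hπ0 hv
  have hnotdvd : ¬ π ∣ s' := hs'm
  have hvs' : v.intValuation s' = 1 := by
    rcases lt_or_eq_of_le (v.intValuation_le_one s') with hlt | heq
    · exfalso
      apply hnotdvd
      have := (v.intValuation_lt_one_iff_dvd s').mp hlt
      rw [hv] at this
      exact Ideal.mem_span_singleton.mp (Ideal.dvd_span_singleton.mp this)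
    · exact heq
  have hvs : v.intValuation (π ^ n * s') = (Multiplicative.ofAdd (-(n : ℤ)) : Multiplicative ℤ) := by
    rw [map_mul, map_pow, hvπ, hvs', mul_one, ← WithZero.coe_pow, ← ofAdd_nsmul]
    norm_num
  have hvsne : (v.intValuation (π ^ n * s') : WithZero (Multiplicative ℤ)) ≠ 0 := by
    rw [hvs]; exact WithZero.coe_ne_zero
  have hr : v.intValuation r ≤ Multiplicative.ofAdd (-(n : ℤ)) := by
    have hval : v.valuation K a = v.intValuation r / v.intValuation (π ^ n * s') := by
      rw [← hrs, map_div₀, valuation_of_algebraMap, valuation_of_algebraMap]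
    rw [hval] at ha
    rw [← hvs]
    exact (div_le_one₀ (by rw [zero_lt_iff]; exact hvsne)).mp ha
  have hdvd : π ^ n ∣ r := by
    have := (v.intValuation_le_pow_iff_dvd r n).mp (by rwa [intValuation_apply] at hr)
    rw [hv, Ideal.span_singleton_pow] at this
    exact Ideal.mem_span_singleton.mp (Ideal.dvd_span_singleton.mp this)
  obtain ⟨r', rfl⟩ := hdvd
  have hπK : algebraMap R K π ≠ 0 := by
    simpa using (map_ne_zero_iff _ (IsFractionRing.injective R K)).mpr hπ0
  have ha' : a = algebraMap R K r' / algebraMap R K s' := by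
    rw [← hrs, map_mul, map_mul, map_pow]
    rw [mul_div_mul_left _ _ (pow_ne_zero n hπK)]
  -- invert s' modulo π
  have hsppr : (Ideal.span {π}).IsPrime := (Ideal.span_singleton_prime hπ0).mpr hπ
  have hspbot : Ideal.span {π} ≠ ⊥ := by simpa [Ideal.span_singleton_eq_bot] using hπ0
  haveI := hsppr
  haveI hmax : (Ideal.span {π}).IsMaximal := Ideal.IsPrime.isMaximal hsppr hspbot
  letI : Field (R ⧸ Ideal.span {π}) := Ideal.Quotient.field _
  obtain ⟨c, hc⟩ : ∃ c, π ∣ s' * c - 1 := by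
    have hQs' : Ideal.Quotient.mk (Ideal.span {π}) s' ≠ 0 := by
      rw [Ne, Ideal.Quotient.eq_zero_iff_mem, Ideal.mem_span_singleton]
      exact hnotdvd
    obtain ⟨d, hd⟩ := Ideal.Quotient.mk_surjective
      ((Ideal.Quotient.mk (Ideal.span {π}) s')⁻¹)
    refine ⟨d, ?_⟩
    rw [← Ideal.mem_span_singleton, ← Ideal.Quotient.eq_zero_iff_mem, map_sub, map_mul, hd,
      map_one, mul_inv_cancel₀ hQs', sub_self]
  refine ⟨r' * c, ?_⟩
  have hs'K : algebraMap R K s' ≠ 0 := by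
    simpa using (map_ne_zero_iff _ (IsFractionRing.injective R K)).mpr hs'0
  have hdiff : a - algebraMap R K (r' * c)
      = algebraMap R K (r' * (1 - s' * c)) / algebraMap R K s' := by
    rw [ha', map_mul, map_mul, map_sub, map_mul, map_one]
    field_simp
  rw [hdiff, map_div₀, valuation_of_algebraMap, valuation_of_algebraMap, hvs', div_one, map_mul]
  have h1 : v.intValuation (1 - s' * c) < 1 := by
    rw [v.intValuation_lt_one_iff_dvd]
    rw [hv]
    have hneg : π ∣ 1 - s' * c := by
      have := dvd_neg.mpr hc
      simpa using this
    exact Ideal.dvd_span_singleton.mpr (Ideal.mem_span_singleton.mpr hneg)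
  calc v.intValuation r' * v.intValuation (1 - s' * c)
      ≤ 1 * v.intValuation (1 - s' * c) :=
        mul_le_mul_left (v.intValuation_le_one r') _
    _ = v.intValuation (1 - s' * c) := one_mul _
    _ < 1 := h1

/-- Let `K = ℚ(ζ₃)`, `λ = 1 - ζ₃`, and let `π` be a prime of `ℤ[ζ₃]` with
`π ≡ 1 (mod λ²)` but `π ≢ 1 (mod λ³)`.  Then `ζ₃` is not a cube in the completion `K_π`. -/
theorem stmt_11 (K : Type*) [Field K] [NumberField K] [IsCyclotomicExtension {3} ℚ K]
    (ζ : K) (hζ : IsPrimitiveRoot ζ 3)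
    (z : 𝓞 K) (hz : algebraMap (𝓞 K) K z = ζ)
    (π : 𝓞 K) (hπ : Prime π)
    (h1 : (1 - z) ^ 2 ∣ π - 1) (h2 : ¬ (1 - z) ^ 3 ∣ π - 1)
    (v : HeightOneSpectrum (𝓞 K)) (hv : v.asIdeal = Ideal.span {π}) :
    ¬ ∃ x : HeightOneSpectrum.adicCompletion K v,
        x ^ 3 = algebraMap K (HeightOneSpectrum.adicCompletion K v) ζ := by
  rintro ⟨x, hx⟩
  set ι := algebraMap K (HeightOneSpectrum.adicCompletion K v) with hι
  have hιval : ∀ k : K, Valued.v (ι k) = v.valuation K k := fun k =>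
    valuedAdicCompletion_eq_valuation' v k
  have hinj : Function.Injective (algebraMap (𝓞 K) K) :=
    NumberField.RingOfIntegers.coe_injective
  have hζ3 : ζ ^ 3 = 1 := hζ.pow_eq_one
  have hz3 : z ^ 3 = 1 := hinj (by rw [map_pow, hz, map_one]; exact hζ3)
  -- the valuation of ζ is 1
  have hvz : v.valuation K ζ = 1 := by
    rw [← hz, valuation_of_algebraMap]
    have hle : v.intValuation z ≤ 1 := v.intValuation_le_one z
    have hle2 : v.intValuation (z ^ 2) ≤ 1 := v.intValuation_le_one _
    have hmul : v.intValuation z * v.intValuation (z ^ 2) = 1 := by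
      rw [← map_mul]
      have hzz : z * z ^ 2 = 1 := by
        calc z * z ^ 2 = z ^ 3 := by ring
          _ = 1 := hz3
      rw [hzz, map_one]
    refine le_antisymm hle ?_
    calc (1 : WithZero (Multiplicative ℤ)) = v.intValuation z * v.intValuation (z ^ 2) :=
          hmul.symm
      _ ≤ v.intValuation z := mul_le_of_le_one_right' hle2
  have hVζ : Valued.v (ι ζ) = 1 := by rw [hιval]; exact hvz
  -- the valuation of x is 1
  have hVx3 : (Valued.v x) ^ 3 = 1 := by rw [← map_pow, hx]; exact hVζ
  have hVx : Valued.v x = 1 := by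
    have h0 : Valued.v x ≠ 0 := by
      intro h
      rw [h] at hVx3
      simp at hVx3
    obtain ⟨g, hg⟩ := WithZero.ne_zero_iff_exists.mp h0
    rw [← hg] at hVx3 ⊢
    rw [← WithZero.coe_pow, ← WithZero.coe_one, WithZero.coe_inj] at hVx3
    have htoadd : Multiplicative.toAdd (g ^ 3) = 0 := by rw [hVx3]; rfl
    rw [toAdd_pow] at htoadd
    have h3 : (3 : ℤ) * Multiplicative.toAdd g = 0 := by
      simpa [nsmul_eq_mul] using htoadd
    have hg0 : Multiplicative.toAdd g = 0 := by linarith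
    have hgone : g = 1 := by
      have := congrArg Multiplicative.ofAdd hg0
      simpa using this
    rw [hgone, WithZero.coe_one]
  -- approximate x by an element of K
  have hU : {y : HeightOneSpectrum.adicCompletion K v |
      (Valued.v (y - x) : WithZero (Multiplicative ℤ))
        < ((1 : (WithZero (Multiplicative ℤ))ˣ) : WithZero (Multiplicative ℤ))} ∈ nhds x :=
    Valued.mem_nhds.mpr ⟨1, fun y hy => by simpa [Valuation.restrict_lt_iff_lt_embedding] using hy⟩
  have hd : x ∈ closure (Set.range ι) :=
    denseRange_algebraMap K v x
  obtain ⟨y, hy1, a, rfl⟩ := mem_closure_iff_nhds.mp hd _ hU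
  have ha1 : Valued.v (ι a - x) < 1 := by simpa using hy1
  have hva : v.valuation K a ≤ 1 := by
    rw [← hιval]
    have heq : ι a = (ι a - x) + x := (sub_add_cancel _ _).symm
    rw [heq]
    exact le_trans (Valued.v.map_add _ _) (max_le (le_of_lt ha1) (le_of_eq hVx))
  have hvaK : Valued.v (ι a) ≤ 1 := by rw [hιval]; exact hva
  have hcube : v.valuation K (a ^ 3 - ζ) < 1 := by
    rw [← hιval]
    have heq : ι (a ^ 3 - ζ) = (ι a - x) * ((ι a) ^ 2 + (ι a) * x + x ^ 2) := by
      rw [map_sub, map_pow, ← hx]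
      ring
    rw [heq, map_mul]
    have hsum : Valued.v ((ι a) ^ 2 + (ι a) * x + x ^ 2) ≤ 1 := by
      refine le_trans (Valued.v.map_add _ _) (max_le (le_trans (Valued.v.map_add _ _)
        (max_le ?_ ?_)) ?_)
      · rw [map_pow]
        exact pow_le_one' hvaK 2
      · rw [map_mul, hVx, mul_one]
        exact hvaK
      · rw [map_pow, hVx, one_pow]
    calc Valued.v (ι a - x) * Valued.v ((ι a) ^ 2 + (ι a) * x + x ^ 2)
        ≤ Valued.v (ι a - x) := mul_le_of_le_one_right' hsum
      _ < 1 := ha1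
  -- approximate a by an algebraic integer
  obtain ⟨b, hb⟩ := approx_lemma v hπ hv a hva
  have hvbK : v.valuation K (algebraMap (𝓞 K) K b) ≤ 1 := valuation_le_one v b
  have hfin : v.valuation K (algebraMap (𝓞 K) K (b ^ 3 - z)) < 1 := by
    have heq : algebraMap (𝓞 K) K (b ^ 3 - z)
        = ((algebraMap (𝓞 K) K b) ^ 3 - a ^ 3) + (a ^ 3 - ζ) := by
      rw [map_sub, map_pow, hz]
      ring
    rw [heq]
    refine lt_of_le_of_lt ((v.valuation K).map_add _ _) (max_lt ?_ hcube)
    have hfac : (algebraMap (𝓞 K) K b) ^ 3 - a ^ 3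
        = (a - algebraMap (𝓞 K) K b) *
          (-((algebraMap (𝓞 K) K b) ^ 2 + (algebraMap (𝓞 K) K b) * a + a ^ 2)) := by
      ring
    rw [hfac, map_mul]
    have hsum : v.valuation K (-((algebraMap (𝓞 K) K b) ^ 2 + (algebraMap (𝓞 K) K b) * a + a ^ 2))
        ≤ 1 := by
      rw [Valuation.map_neg]
      refine le_trans ((v.valuation K).map_add _ _) (max_le (le_trans ((v.valuation K).map_add _ _)
        (max_le ?_ ?_)) ?_)
      · rw [map_pow]
        exact pow_le_one' hvbK 2
      · rw [map_mul]
        exact mul_le_one' hvbK hva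
      · rw [map_pow]
        exact pow_le_one' hva 2
    calc v.valuation K (a - algebraMap (𝓞 K) K b) *
          v.valuation K (-((algebraMap (𝓞 K) K b) ^ 2 + (algebraMap (𝓞 K) K b) * a + a ^ 2))
        ≤ v.valuation K (a - algebraMap (𝓞 K) K b) := mul_le_of_le_one_right' hsum
      _ < 1 := hb
  have hdvd : π ∣ b ^ 3 - z := by
    have := (v.valuation_lt_one_iff_dvd (b ^ 3 - z)).mp hfin
    rw [hv] at this
    exact Ideal.mem_span_singleton.mp (Ideal.dvd_span_singleton.mp this)
  exact core_contradiction ζ hζ z hz π hπ h1 h2 b hdvd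
end
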